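/- (k-step belief error bound) Let b_{t+k} = softmax(log b_t + Σ_{i=0}^{k-1} ℓ_{t+i}) and b̂_{t+k} = softmax(log b_t + Σ_{i=0}^{k-1} ℓ̂_{t+i}) be the true and approximate beliefs after k softmax-Bayes updates from a common initial belief b_t with positive entries. If ||ℓ̂_{t+i} - ℓ_{t+i}||_∞ ≤ ε_{t+i} for each i, then ||b̂_{t+k} - b_{t+k}||_1 ≤ 2 Σ_{i=0}^{k-1} ε_{t+i}; in particular if ε_{t+i} ≤ ε for all i then ||b̂_{t+k} - b_{t+k}||_1 ≤ 2kε. -/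

import Mathlib

open Finset

/-- softmax(x)_z = exp(x_z) / Σ_{z'} exp(x_{z'}) -/
noncomputable def softmax {Z : Type*} [Fintype Z] (x : Z → ℝ) : Z → ℝ :=
  fun z => Real.exp (x z) / ∑ z', Real.exp (x z')

lemma aux_cosh_ineq (t : ℝ) (ht : 0 ≤ t) :
    Real.exp t + Real.exp (-t) - 2 ≤ t * (Real.exp t - Real.exp (-t)) := by
  set f : ℝ → ℝ := fun s => s * (Real.exp s - Real.exp (-s)) - (Real.exp s + Real.exp (-s) - 2)
    with hf
  have hderiv : ∀ s : ℝ, HasDerivAt f (s * (Real.exp s + Real.exp (-s))) s := by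
    intro s
    have h1 : HasDerivAt (fun u : ℝ => Real.exp u) (Real.exp s) s := Real.hasDerivAt_exp s
    have h2 : HasDerivAt (fun u : ℝ => Real.exp (-u)) (-Real.exp (-s)) s := by
      simpa [Function.comp_def] using (Real.hasDerivAt_exp (-s)).comp s (hasDerivAt_neg s)
    have h3 : HasDerivAt (fun u : ℝ => u * (Real.exp u - Real.exp (-u)))
        (1 * (Real.exp s - Real.exp (-s)) + s * (Real.exp s - -Real.exp (-s))) s :=
      (hasDerivAt_id s).mul (h1.sub h2)
    have h4 : HasDerivAt f (1 * (Real.exp s - Real.exp (-s)) + s * (Real.exp s - -Real.exp (-s)) -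
        (Real.exp s + -Real.exp (-s))) s := h3.sub ((h1.add h2).sub_const 2)
    convert h4 using 1
    ring
  have hdiff : Differentiable ℝ f := fun s => (hderiv s).differentiableAt
  have hmono : MonotoneOn f (Set.Ici (0:ℝ)) := by
    apply monotoneOn_of_deriv_nonneg (convex_Ici 0) hdiff.continuous.continuousOn
      hdiff.differentiableOn
    intro s hs
    rw [(hderiv s).deriv]
    have hs' : 0 < s := by simpa using hs
    have : 0 < Real.exp s + Real.exp (-s) := by positivity
    positivity
  have h0 : f 0 = 0 := by norm_num [hf]
  have := hmono (Set.self_mem_Ici) (Set.mem_Ici.mpr ht) ht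
  rw [h0] at this
  simp only [hf] at this
  linarith

lemma softmax_L1 {Z : Type*} [Fintype Z] [Nonempty Z] (x y : Z → ℝ) (ε : ℝ)
    (h : ∀ z, |y z - x z| ≤ ε) :
    ∑ z, |softmax y z - softmax x z| ≤ 2 * ε := by
  have hε : 0 ≤ ε := le_trans (abs_nonneg _) (h (Classical.arbitrary Z))
  rcases eq_or_lt_of_le hε with hε0 | hεpos
  · -- ε = 0, so y = x
    have hyx : y = x := by
      funext z
      have := h z
      rw [← hε0] at this
      have := abs_nonpos_iff.mp this
      linarith [sub_eq_zero.mp this]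
    simp [hyx, ← hε0]
  · set S := ∑ z, Real.exp (x z) with hSdef
    have hS : 0 < S := Finset.sum_pos (fun z _ => Real.exp_pos _) univ_nonempty
    set p := fun z => Real.exp (x z) / S with hpdef
    set v := fun z => Real.exp (y z - x z) with hvdef
    set r := ∑ z, p z * v z with hrdef
    have hp_pos : ∀ z, 0 < p z := fun z => div_pos (Real.exp_pos _) hS
    have hp_sum : ∑ z, p z = 1 := by
      rw [hpdef, ← Finset.sum_div]
      field_simp
      exact hSdef.symm
    have hpv : ∀ z, p z * v z = Real.exp (y z) / S := by
      intro z
      rw [hpdef, hvdef]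
      rw [div_mul_eq_mul_div, ← Real.exp_add]
      ring_nf
    have hS' : 0 < ∑ z, Real.exp (y z) := Finset.sum_pos (fun z _ => Real.exp_pos _) univ_nonempty
    have hr : r = (∑ z, Real.exp (y z)) / S := by
      rw [hrdef]
      simp only [hpv]
      rw [Finset.sum_div]
    have hr_pos : 0 < r := by rw [hr]; positivity
    have hsx : ∀ z, softmax x z = p z := fun z => rfl
    have hq : ∀ z, softmax y z = p z * v z / r := by
      intro z
      rw [hpv, hr, softmax]
      rw [div_div_div_cancel_right₀]
      exact ne_of_gt hS
    set m := Real.exp (-ε) with hmdef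
    set M := Real.exp ε with hMdef
    have hm_pos : 0 < m := Real.exp_pos _
    have hv_lb : ∀ z, m ≤ v z := fun z => Real.exp_le_exp.2 (abs_le.mp (h z)).1
    have hv_ub : ∀ z, v z ≤ M := fun z => Real.exp_le_exp.2 (abs_le.mp (h z)).2
    have hrm : m ≤ r := by
      calc m = ∑ z, p z * m := by rw [← Finset.sum_mul, hp_sum, one_mul]
        _ ≤ ∑ z, p z * v z :=
          Finset.sum_le_sum fun z _ => mul_le_mul_of_nonneg_left (hv_lb z) (hp_pos z).le
    have hrM : r ≤ M := by
      calc r = ∑ z, p z * v z := hrdef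
        _ ≤ ∑ z, p z * M :=
          Finset.sum_le_sum fun z _ => mul_le_mul_of_nonneg_left (hv_ub z) (hp_pos z).le
        _ = M := by rw [← Finset.sum_mul, hp_sum, one_mul]
    have hMm : M * m = 1 := by rw [hMdef, hmdef, ← Real.exp_add]; simp
    have hMm_pos : 0 < M - m := by
      have : m < M := Real.exp_lt_exp.2 (by linarith)
      linarith
    -- chord bound pointwise
    have key : ∀ z, (M - m) * max (r - v z) 0 ≤ (M - v z) * (r - m) := by
      intro z
      have h1 := hv_lb z
      have h2 := hv_ub z
      rcases le_or_gt (v z) r with hc | hc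
      · rw [max_eq_left (by linarith)]
        nlinarith
      · rw [max_eq_right (by linarith)]
        nlinarith
    have sum_key : (M - m) * (∑ z, p z * max (r - v z) 0) ≤ (M - r) * (r - m) := by
      calc (M - m) * (∑ z, p z * max (r - v z) 0)
          = ∑ z, p z * ((M - m) * max (r - v z) 0) := by
            rw [Finset.mul_sum]; congr 1; funext z; ring
        _ ≤ ∑ z, p z * ((M - v z) * (r - m)) :=
            Finset.sum_le_sum fun z _ => mul_le_mul_of_nonneg_left (key z) (hp_pos z).le
        _ = (M - r) * (r - m) := by
            rw [show (M - r) * (r - m) = (∑ z, (p z * M - p z * v z)) * (r - m) by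
              rw [Finset.sum_sub_distrib, ← Finset.sum_mul, hp_sum, ← hrdef]; ring]
            rw [Finset.sum_mul]
            apply Finset.sum_congr rfl; intro z _; ring
    have amgm : (M - r) * (r - m) ≤ r * (M + m - 2) := by nlinarith [sq_nonneg (r - 1)]
    have haux : M + m - 2 ≤ ε * (M - m) := by
      have := aux_cosh_ineq ε hε
      rw [← hMdef, ← hmdef] at this
      linarith
    have habs : ∑ z, p z * max (r - v z) 0 ≤ ε * r := by
      have h1 : (M - m) * (∑ z, p z * max (r - v z) 0) ≤ (M - m) * (ε * r) := by
        calc (M - m) * (∑ z, p z * max (r - v z) 0) ≤ (M - r) * (r - m) := sum_key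
          _ ≤ r * (M + m - 2) := amgm
          _ ≤ r * (ε * (M - m)) := mul_le_mul_of_nonneg_left haux hr_pos.le
          _ = (M - m) * (ε * r) := by ring
      exact le_of_mul_le_mul_left h1 hMm_pos
    -- now compute the L1 sum
    have hterm : ∀ z, |softmax y z - softmax x z| = p z * |v z - r| / r := by
      intro z
      rw [hq z, hsx z]
      rw [show p z * v z / r - p z = p z * (v z - r) / r by field_simp]
      rw [abs_div, abs_mul, abs_of_pos (hp_pos z), abs_of_pos hr_pos]
    have habs_split : ∀ z, |v z - r| = (v z - r) + 2 * max (r - v z) 0 := by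
      intro z
      rcases le_or_gt r (v z) with hc | hc
      · rw [abs_of_nonneg (by linarith), max_eq_right (by linarith)]; ring
      · rw [abs_of_neg (by linarith), max_eq_left (by linarith)]; ring
    calc ∑ z, |softmax y z - softmax x z|
        = (∑ z, p z * |v z - r|) / r := by
          simp only [hterm]; rw [Finset.sum_div]
      _ = (∑ z, (p z * (v z - r) + 2 * (p z * max (r - v z) 0))) / r := by
          congr 1; apply Finset.sum_congr rfl; intro z _
          rw [habs_split z]; ring
      _ = (2 * ∑ z, p z * max (r - v z) 0) / r := by
          rw [Finset.sum_add_distrib, ← Finset.mul_sum]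
          congr 1
          have : ∑ z, p z * (v z - r) = 0 := by
            simp only [mul_sub, Finset.sum_sub_distrib, ← Finset.sum_mul, hp_sum, ← hrdef]
            ring
          rw [this]; ring
      _ ≤ (2 * (ε * r)) / r := by
          apply div_le_div_of_nonneg_right ?_ hr_pos.le
          linarith [habs]
      _ = 2 * ε := by field_simp

theorem k_step_belief_error {Z : Type*} [Fintype Z] (bt : Z → ℝ)
    (ℓ ℓhat : ℕ → Z → ℝ) (ε : ℕ → ℝ) (t k : ℕ)
    (hpos : ∀ z, 0 < bt z) (hsum : ∑ z, bt z = 1)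
    (herr : ∀ i < k, ∀ z, |ℓhat (t + i) z - ℓ (t + i) z| ≤ ε (t + i)) :
    (∑ z, |softmax (fun z => Real.log (bt z) + ∑ i ∈ Finset.range k, ℓhat (t + i) z) z -
           softmax (fun z => Real.log (bt z) + ∑ i ∈ Finset.range k, ℓ (t + i) z) z|
        ≤ 2 * ∑ i ∈ Finset.range k, ε (t + i)) ∧
    (∀ εb : ℝ, (∀ i < k, ε (t + i) ≤ εb) →
      ∑ z, |softmax (fun z => Real.log (bt z) + ∑ i ∈ Finset.range k, ℓhat (t + i) z) z -
            softmax (fun z => Real.log (bt z) + ∑ i ∈ Finset.range k, ℓ (t + i) z) z|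
        ≤ 2 * k * εb) := by
  have hZ : Nonempty Z := by
    by_contra hne
    rw [not_nonempty_iff] at hne
    rw [Finset.univ_eq_empty, Finset.sum_empty] at hsum
    exact one_ne_zero hsum.symm
  have hbound : ∀ z, |(Real.log (bt z) + ∑ i ∈ Finset.range k, ℓhat (t + i) z) -
      (Real.log (bt z) + ∑ i ∈ Finset.range k, ℓ (t + i) z)| ≤ ∑ i ∈ Finset.range k, ε (t + i) := by
    intro z
    have : (Real.log (bt z) + ∑ i ∈ Finset.range k, ℓhat (t + i) z) -
        (Real.log (bt z) + ∑ i ∈ Finset.range k, ℓ (t + i) z)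
        = ∑ i ∈ Finset.range k, (ℓhat (t + i) z - ℓ (t + i) z) := by
      rw [Finset.sum_sub_distrib]; ring
    rw [this]
    calc |∑ i ∈ Finset.range k, (ℓhat (t + i) z - ℓ (t + i) z)|
        ≤ ∑ i ∈ Finset.range k, |ℓhat (t + i) z - ℓ (t + i) z| :=
          Finset.abs_sum_le_sum_abs _ _
      _ ≤ ∑ i ∈ Finset.range k, ε (t + i) :=
          Finset.sum_le_sum fun i hi => herr i (Finset.mem_range.mp hi) z
  have main := softmax_L1 _ _ _ hbound
  refine ⟨main, fun εb hεb => le_trans main ?_⟩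
  have hsum_le : ∑ i ∈ Finset.range k, ε (t + i) ≤ k * εb := by
    calc ∑ i ∈ Finset.range k, ε (t + i) ≤ ∑ _i ∈ Finset.range k, εb :=
        Finset.sum_le_sum fun i hi => hεb i (Finset.mem_range.mp hi)
      _ = k * εb := by rw [Finset.sum_const, Finset.card_range, nsmul_eq_mul]
  linarith
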